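/- arXiv:2203.00081 — 4 statements merged into one kernel-verified Lean document; each statement's English description precedes it below -/
import Mathlib

section
/- If E‖X‖⁴ < ∞, then for independent X, X₁, X₂, X₃, X₄ with distribution F, the double centered distance satisfies E[d(X₁,X) · d(X₂,X) · d(X₃,X) · d(X₄,X)] = 0. -/
open MeasureTheory ProbabilityTheory

/-- If `E‖X‖⁴ < ∞`, then for independent `X, X₁, X₂, X₃, X₄` with
distribution `F`, the double centered distance satisfies
`E[d(X₁,X) · d(X₂,X) · d(X₃,X) · d(X₄,X)] = 0`. -/
theorem gini_double_centered_fourth_orthogonal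
    {Ω : Type*} [MeasurableSpace Ω] (μ : Measure Ω) [IsProbabilityMeasure μ]
    (p : ℕ) (F : Measure (EuclideanSpace ℝ (Fin p))) [IsProbabilityMeasure F]
    (X X₁ X₂ X₃ X₄ : Ω → EuclideanSpace ℝ (Fin p))
    (hX : Measurable X) (hX₁ : Measurable X₁) (hX₂ : Measurable X₂)
    (hX₃ : Measurable X₃) (hX₄ : Measurable X₄)
    (hXF : μ.map X = F) (hX₁F : μ.map X₁ = F) (hX₂F : μ.map X₂ = F)
    (hX₃F : μ.map X₃ = F) (hX₄F : μ.map X₄ = F)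
    (hindep : iIndepFun ![X, X₁, X₂, X₃, X₄] μ)
    (hmom : Integrable (fun x => ‖x‖ ^ 4) F)
    (Δ : ℝ) (hΔ : Δ = ∫ x, ∫ y, ‖x - y‖ ∂F ∂F)
    (g : EuclideanSpace ℝ (Fin p) → ℝ) (hg : ∀ x, g x = ∫ y, ‖y - x‖ ∂F)
    (d : EuclideanSpace ℝ (Fin p) → EuclideanSpace ℝ (Fin p) → ℝ)
    (hd : ∀ x₁ x₂, d x₁ x₂ = ‖x₁ - x₂‖ - g x₁ - g x₂ + Δ) :
    ∫ ω, d (X₁ ω) (X ω) * d (X₂ ω) (X ω) * d (X₃ ω) (X ω) * d (X₄ ω) (X ω) ∂μ = 0 := by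
  -- first moment is finite
  have hnorm : Integrable (fun y : EuclideanSpace ℝ (Fin p) => ‖y‖) F := by
    have hbound : Integrable (fun y : EuclideanSpace ℝ (Fin p) => 1 + ‖y‖ ^ 4) F :=
      integrable_const_add_iff.mpr hmom
    refine hbound.mono measurable_norm.aestronglyMeasurable
      (Filter.Eventually.of_forall fun y => ?_)
    have h0 : (0:ℝ) ≤ ‖y‖ := norm_nonneg y
    have h4 : (0:ℝ) ≤ ‖y‖ ^ 4 := by positivity
    rw [norm_norm, Real.norm_eq_abs, abs_of_nonneg (by linarith)]
    rcases le_total ‖y‖ 1 with h | h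
    · linarith
    · have h1 : ‖y‖ ^ 1 ≤ ‖y‖ ^ 4 := pow_le_pow_right₀ h (by norm_num)
      rw [pow_one] at h1
      linarith
  have hi1 : ∀ x : EuclideanSpace ℝ (Fin p),
      Integrable (fun y : EuclideanSpace ℝ (Fin p) => ‖y - x‖) F := by
    intro x
    have hbound : Integrable (fun y : EuclideanSpace ℝ (Fin p) => ‖y‖ + ‖x‖) F :=
      integrable_add_const_iff.mpr hnorm
    refine hbound.mono ((measurable_id.sub measurable_const).norm.aestronglyMeasurable)
      (Filter.Eventually.of_forall fun y => ?_)
    rw [norm_norm, Real.norm_eq_abs, abs_of_nonneg (by positivity)]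
    exact norm_sub_le y x
  -- g is measurable
  have hgm : Measurable g := by
    rw [show g = fun x => ∫ y, ‖y - x‖ ∂F from funext hg]
    exact ((continuous_snd.sub continuous_fst).norm.stronglyMeasurable.integral_prod_right'
      (ν := F)).measurable
  -- g is nonnegative and bounded by M + ‖y‖
  have hMnn : (0:ℝ) ≤ ∫ z, ‖z‖ ∂F := integral_nonneg fun z => norm_nonneg z
  have hg0 : ∀ y, 0 ≤ g y := fun y => by
    rw [hg]; exact integral_nonneg fun z => norm_nonneg _
  have hgle : ∀ y : EuclideanSpace ℝ (Fin p), g y ≤ (∫ z, ‖z‖ ∂F) + ‖y‖ := by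
    intro y
    rw [hg]
    calc ∫ z, ‖z - y‖ ∂F ≤ ∫ z, (‖z‖ + ‖y‖) ∂F :=
          integral_mono (hi1 y) (integrable_add_const_iff.mpr hnorm) fun z => norm_sub_le z y
      _ = (∫ z, ‖z‖ ∂F) + ‖y‖ := by
          rw [integral_add hnorm (integrable_const _), integral_const]
          simp
  have hgF : Integrable g F := by
    have hbound : Integrable (fun y : EuclideanSpace ℝ (Fin p) => (∫ z, ‖z‖ ∂F) + ‖y‖) F :=
      integrable_const_add_iff.mpr hnorm
    refine hbound.mono hgm.aestronglyMeasurable (Filter.Eventually.of_forall fun y => ?_)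
    rw [Real.norm_eq_abs, abs_of_nonneg (hg0 y), Real.norm_eq_abs,
      abs_of_nonneg (by positivity)]
    exact hgle y
  -- ∫ g dF = Δ
  have hIG : ∫ y, g y ∂F = Δ := by
    have h1 : ∫ y, g y ∂F = ∫ y, ∫ z, ‖z - y‖ ∂F ∂F := by simp only [hg]
    have h2 : ∀ y : EuclideanSpace ℝ (Fin p), ∫ z, ‖z - y‖ ∂F = ∫ z, ‖y - z‖ ∂F := fun y =>
      integral_congr_ae (Filter.Eventually.of_forall fun z => norm_sub_rev z y)
    rw [h1, integral_congr_ae (Filter.Eventually.of_forall h2), ← hΔ]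
  -- key: ∫ d(y, x) dF(y) = 0 for every x
  have h0 : ∀ x : EuclideanSpace ℝ (Fin p), ∫ y, d y x ∂F = 0 := by
    intro x
    simp only [hd]
    have hA : Integrable (fun y : EuclideanSpace ℝ (Fin p) => ‖y - x‖ - g y) F :=
      (hi1 x).sub hgF
    have hB : Integrable (fun y : EuclideanSpace ℝ (Fin p) => ‖y - x‖ - g y - g x) F :=
      hA.sub (integrable_const _)
    rw [integral_add hB (integrable_const _), integral_sub hA (integrable_const _),
      integral_sub (hi1 x) hgF, integral_const, integral_const, hIG, ← hg x]
    simp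
  -- measurability of d as a function of a pair
  have hdm : Measurable (fun q : EuclideanSpace ℝ (Fin p) × EuclideanSpace ℝ (Fin p) =>
      d q.1 q.2) := by
    simp only [hd]
    exact (((measurable_fst.sub measurable_snd).norm.sub (hgm.comp measurable_fst)).sub
      (hgm.comp measurable_snd)).add measurable_const
  -- independence structure
  have hmeas : ∀ i, Measurable (![X, X₁, X₂, X₃, X₄] i) := by
    intro i; fin_cases i <;> assumption
  have i34 : IndepFun X₃ X₄ μ := hindep.indepFun (show (3 : Fin 5) ≠ 4 by decide)
  have i2 : IndepFun X₂ (fun ω => (X₃ ω, X₄ ω)) μ :=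
    (hindep.indepFun_prodMk hmeas 3 4 2 (by decide) (by decide)).symm
  have i1 : IndepFun X₁ (fun ω => (X₂ ω, (X₃ ω, X₄ ω))) μ := by
    have h := (hindep.indepFun_finset {1} {2, 3, 4} (by decide) hmeas).comp
      (measurable_pi_apply (⟨1, by decide⟩ : ({1} : Finset (Fin 5))))
      (show Measurable fun v : ({2,3,4} : Finset (Fin 5)) → EuclideanSpace ℝ (Fin p) =>
          (v ⟨2, by decide⟩, (v ⟨3, by decide⟩, v ⟨4, by decide⟩)) from
        (measurable_pi_apply _).prodMk
          ((measurable_pi_apply _).prodMk (measurable_pi_apply _)))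
    exact h
  have i0 : IndepFun X (fun ω => (X₁ ω, (X₂ ω, (X₃ ω, X₄ ω)))) μ := by
    have h := (hindep.indepFun_finset {0} {1, 2, 3, 4} (by decide) hmeas).comp
      (measurable_pi_apply (⟨0, by decide⟩ : ({0} : Finset (Fin 5))))
      (show Measurable fun v : ({1,2,3,4} : Finset (Fin 5)) → EuclideanSpace ℝ (Fin p) =>
          (v ⟨1, by decide⟩, (v ⟨2, by decide⟩, (v ⟨3, by decide⟩, v ⟨4, by decide⟩))) from
        (measurable_pi_apply _).prodMk ((measurable_pi_apply _).prodMk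
          ((measurable_pi_apply _).prodMk (measurable_pi_apply _))))
    exact h
  -- joint laws
  have m34 : μ.map (fun ω => (X₃ ω, X₄ ω)) = F.prod F := by
    rw [(indepFun_iff_map_prod_eq_prod_map_map hX₃.aemeasurable hX₄.aemeasurable).mp i34,
      hX₃F, hX₄F]
  have hV2 : Measurable fun ω => (X₃ ω, X₄ ω) := hX₃.prodMk hX₄
  have m234 : μ.map (fun ω => (X₂ ω, (X₃ ω, X₄ ω))) = F.prod (F.prod F) := by
    rw [(indepFun_iff_map_prod_eq_prod_map_map hX₂.aemeasurable hV2.aemeasurable).mp i2,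
      hX₂F, m34]
  have hV3 : Measurable fun ω => (X₂ ω, (X₃ ω, X₄ ω)) := hX₂.prodMk hV2
  have m1234 : μ.map (fun ω => (X₁ ω, (X₂ ω, (X₃ ω, X₄ ω)))) =
      F.prod (F.prod (F.prod F)) := by
    rw [(indepFun_iff_map_prod_eq_prod_map_map hX₁.aemeasurable hV3.aemeasurable).mp i1,
      hX₁F, m234]
  have hV4 : Measurable fun ω => (X₁ ω, (X₂ ω, (X₃ ω, X₄ ω))) := hX₁.prodMk hV3
  have mfull : μ.map (fun ω => (X ω, (X₁ ω, (X₂ ω, (X₃ ω, X₄ ω))))) =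
      F.prod (F.prod (F.prod (F.prod F))) := by
    rw [(indepFun_iff_map_prod_eq_prod_map_map hX.aemeasurable hV4.aemeasurable).mp i0,
      hXF, m1234]
  have hY : Measurable fun ω => (X ω, (X₁ ω, (X₂ ω, (X₃ ω, X₄ ω)))) := hX.prodMk hV4
  -- the integrand as a function on the product space
  set f : EuclideanSpace ℝ (Fin p) × (EuclideanSpace ℝ (Fin p) × (EuclideanSpace ℝ (Fin p) ×
      (EuclideanSpace ℝ (Fin p) × EuclideanSpace ℝ (Fin p)))) → ℝ :=
    fun z => d z.2.1 z.1 * d z.2.2.1 z.1 * d z.2.2.2.1 z.1 * d z.2.2.2.2 z.1 with hfdef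
  have hfm : Measurable f := by
    apply Measurable.mul
    apply Measurable.mul
    apply Measurable.mul
    · exact hdm.comp (measurable_snd.fst.prodMk measurable_fst)
    · exact hdm.comp (measurable_snd.snd.fst.prodMk measurable_fst)
    · exact hdm.comp (measurable_snd.snd.snd.fst.prodMk measurable_fst)
    · exact hdm.comp (measurable_snd.snd.snd.snd.prodMk measurable_fst)
  have key : ∫ ω, d (X₁ ω) (X ω) * d (X₂ ω) (X ω) * d (X₃ ω) (X ω) * d (X₄ ω) (X ω) ∂μ
      = ∫ z, f z ∂(F.prod (F.prod (F.prod (F.prod F)))) := by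
    rw [← mfull, integral_map hY.aemeasurable hfm.aestronglyMeasurable]
  rw [key]
  -- now compute over the product measure
  by_cases hInt : Integrable f (F.prod (F.prod (F.prod (F.prod F))))
  · rw [MeasureTheory.integral_prod _ hInt]
    have hinner : ∀ x : EuclideanSpace ℝ (Fin p),
        ∫ w : EuclideanSpace ℝ (Fin p) × (EuclideanSpace ℝ (Fin p) ×
            (EuclideanSpace ℝ (Fin p) × EuclideanSpace ℝ (Fin p))),
          f (x, w) ∂(F.prod (F.prod (F.prod F))) = 0 := by
      intro x
      by_cases h2 : Integrable (fun w : EuclideanSpace ℝ (Fin p) × (EuclideanSpace ℝ (Fin p) ×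
          (EuclideanSpace ℝ (Fin p) × EuclideanSpace ℝ (Fin p))) => f (x, w))
          (F.prod (F.prod (F.prod F)))
      · rw [MeasureTheory.integral_prod _ h2]
        simp only [hfdef, mul_assoc]
        have hpull : ∀ y : EuclideanSpace ℝ (Fin p),
            ∫ u : EuclideanSpace ℝ (Fin p) × (EuclideanSpace ℝ (Fin p) ×
                EuclideanSpace ℝ (Fin p)),
              d y x * (d u.1 x * (d u.2.1 x * d u.2.2 x)) ∂(F.prod (F.prod F))
              = d y x * ∫ u : EuclideanSpace ℝ (Fin p) × (EuclideanSpace ℝ (Fin p) ×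
                EuclideanSpace ℝ (Fin p)),
              d u.1 x * (d u.2.1 x * d u.2.2 x) ∂(F.prod (F.prod F)) := fun y =>
            integral_const_mul _ _
        rw [integral_congr_ae (Filter.Eventually.of_forall hpull), integral_mul_const,
          h0 x, zero_mul]
      · exact integral_undef h2
    rw [integral_congr_ae (Filter.Eventually.of_forall hinner), integral_zero]
  · exact integral_undef hInt
end

section
/- If E‖X‖⁴ < ∞, then for independent X, X₁, X₂, X₃ with distribution F, the double centered distance satisfies E[d²(X₁,X) · d(X₂,X) · d(X₃,X)] = 0. -/
open MeasureTheory ProbabilityTheory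

/-- If `E‖X‖⁴ < ∞`, then for independent `X, X₁, X₂, X₃` with
distribution `F`, the double centered distance satisfies
`E[d²(X₁,X) · d(X₂,X) · d(X₃,X)] = 0`. -/
theorem gini_double_centered_sq_orthogonal
    {Ω : Type*} [MeasurableSpace Ω] (μ : Measure Ω) [IsProbabilityMeasure μ]
    (p : ℕ) (F : Measure (EuclideanSpace ℝ (Fin p))) [IsProbabilityMeasure F]
    (X X₁ X₂ X₃ : Ω → EuclideanSpace ℝ (Fin p))
    (hX : Measurable X) (hX₁ : Measurable X₁) (hX₂ : Measurable X₂) (hX₃ : Measurable X₃)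
    (hXF : μ.map X = F) (hX₁F : μ.map X₁ = F) (hX₂F : μ.map X₂ = F) (hX₃F : μ.map X₃ = F)
    (hindep : iIndepFun ![X, X₁, X₂, X₃] μ)
    (hmom : Integrable (fun x => ‖x‖ ^ 4) F)
    (Δ : ℝ) (hΔ : Δ = ∫ x, ∫ y, ‖x - y‖ ∂F ∂F)
    (g : EuclideanSpace ℝ (Fin p) → ℝ) (hg : ∀ x, g x = ∫ y, ‖y - x‖ ∂F)
    (d : EuclideanSpace ℝ (Fin p) → EuclideanSpace ℝ (Fin p) → ℝ)
    (hd : ∀ x₁ x₂, d x₁ x₂ = ‖x₁ - x₂‖ - g x₁ - g x₂ + Δ) :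
    ∫ ω, d (X₁ ω) (X ω) ^ 2 * d (X₂ ω) (X ω) * d (X₃ ω) (X ω) ∂μ = 0 := by
  classical
  -- measurability of g
  have hgfun : g = fun x => ∫ y, ‖y - x‖ ∂F := funext hg
  have hgsm : StronglyMeasurable g := by
    rw [hgfun]
    exact (Continuous.stronglyMeasurable (by fun_prop :
      Continuous fun q : EuclideanSpace ℝ (Fin p) × EuclideanSpace ℝ (Fin p) =>
        ‖q.2 - q.1‖)).integral_prod_right'
  -- integrability of the norm
  have hnorm : Integrable (fun x : EuclideanSpace ℝ (Fin p) => ‖x‖) F := by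
    refine (hmom.add (integrable_const 1)).mono'
      (Continuous.aestronglyMeasurable (by fun_prop)) ?_
    filter_upwards with x
    simp only [Pi.add_apply]
    have h0 : (0:ℝ) ≤ ‖x‖ := norm_nonneg x
    rw [Real.norm_eq_abs, abs_of_nonneg h0]
    rcases le_or_gt ‖x‖ 1 with h1 | h1
    · have : (0:ℝ) ≤ ‖x‖ ^ 4 := by positivity
      linarith
    · have : ‖x‖ ≤ ‖x‖ ^ 4 := le_self_pow₀ h1.le (by norm_num)
      linarith
  have hInt_sub : ∀ x : EuclideanSpace ℝ (Fin p),
      Integrable (fun y : EuclideanSpace ℝ (Fin p) => ‖y - x‖) F := by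
    intro x
    refine (hnorm.add (integrable_const ‖x‖)).mono'
      (Continuous.aestronglyMeasurable (by fun_prop)) ?_
    filter_upwards with y
    simp only [Pi.add_apply]
    rw [Real.norm_eq_abs, abs_of_nonneg (norm_nonneg _)]
    exact norm_sub_le y x
  have hgInt : Integrable g F := by
    refine ((integrable_const (∫ y, ‖y‖ ∂F)).add hnorm).mono'
      hgsm.aestronglyMeasurable ?_
    filter_upwards with x
    simp only [Pi.add_apply]
    have hgx0 : 0 ≤ g x := by
      rw [hg x]; exact integral_nonneg fun y => norm_nonneg _
    rw [Real.norm_eq_abs, abs_of_nonneg hgx0, hg x]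
    calc ∫ y, ‖y - x‖ ∂F ≤ ∫ y, (‖y‖ + ‖x‖) ∂F :=
          integral_mono (hInt_sub x) (hnorm.add (integrable_const _))
            fun y => norm_sub_le y x
      _ = (∫ y, ‖y‖ ∂F) + ‖x‖ := by
          rw [integral_add hnorm (integrable_const _), integral_const]
          simp
  -- ∫ g = Δ
  have hgF : ∫ x, g x ∂F = Δ := by
    rw [hgfun, hΔ]
    simp_rw [norm_sub_rev]
  -- the key pointwise vanishing
  have hzero : ∀ x : EuclideanSpace ℝ (Fin p), ∫ z, d z x ∂F = 0 := by
    intro x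
    have hrw : (fun z => d z x) = fun z => (‖z - x‖ - g z) + (Δ - g x) := by
      funext z; rw [hd]; ring
    have hint1 : Integrable (fun z : EuclideanSpace ℝ (Fin p) => ‖z - x‖ - g z) F :=
      (hInt_sub x).sub hgInt
    rw [hrw, integral_add hint1 (integrable_const _),
      integral_sub (hInt_sub x) hgInt, integral_const, hgF, ← hg x]
    simp
  -- measurability of d as a function of a pair
  have hdm : Measurable (fun q : EuclideanSpace ℝ (Fin p) × EuclideanSpace ℝ (Fin p) =>
      d q.1 q.2) := by
    have hrw : (fun q : EuclideanSpace ℝ (Fin p) × EuclideanSpace ℝ (Fin p) => d q.1 q.2)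
        = fun q : EuclideanSpace ℝ (Fin p) × EuclideanSpace ℝ (Fin p) =>
          ‖q.1 - q.2‖ - g q.1 - g q.2 + Δ := by
      funext q; exact hd _ _
    rw [hrw]
    exact (((by fun_prop : Measurable fun q : EuclideanSpace ℝ (Fin p) ×
        EuclideanSpace ℝ (Fin p) => ‖q.1 - q.2‖).sub
      (hgsm.measurable.comp measurable_fst)).sub
      (hgsm.measurable.comp measurable_snd)).add_const Δ
  -- independence of (X, X₁, X₃) and X₂
  have hYm : Measurable fun ω => (X ω, X₁ ω, X₃ ω) := hX.prodMk (hX₁.prodMk hX₃)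
  have hfmeas : ∀ i, Measurable (![X, X₁, X₂, X₃] i) := by
    intro i
    fin_cases i
    exacts [hX, hX₁, hX₂, hX₃]
  have hindY : IndepFun (fun ω => (X ω, X₁ ω, X₃ ω)) X₂ μ := by
    have h := hindep.indepFun_finset {0, 1, 3} {2} (by decide) hfmeas
    have hφ : Measurable fun v : (∀ i : ({0, 1, 3} : Finset (Fin 4)),
        EuclideanSpace ℝ (Fin p)) =>
        (v ⟨0, by decide⟩, v ⟨1, by decide⟩, v ⟨3, by decide⟩) := by fun_prop
    have hψ : Measurable fun v : (∀ i : ({2} : Finset (Fin 4)),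
        EuclideanSpace ℝ (Fin p)) => v ⟨2, by decide⟩ := by fun_prop
    exact h.comp hφ hψ
  have hmapY : μ.map (fun ω => ((X ω, X₁ ω, X₃ ω), X₂ ω))
      = (μ.map (fun ω => (X ω, X₁ ω, X₃ ω))).prod F := by
    rw [← hX₂F]
    exact (indepFun_iff_map_prod_eq_prod_map_map hYm.aemeasurable
      hX₂.aemeasurable).mp hindY
  -- the integrand on the product space
  set H : (EuclideanSpace ℝ (Fin p) × EuclideanSpace ℝ (Fin p) × EuclideanSpace ℝ (Fin p))
      × EuclideanSpace ℝ (Fin p) → ℝ :=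
    fun z => d z.1.2.1 z.1.1 ^ 2 * d z.2 z.1.1 * d z.1.2.2 z.1.1 with hHdef
  have hHm : Measurable H := by
    have h1 : Measurable fun z : (EuclideanSpace ℝ (Fin p) × EuclideanSpace ℝ (Fin p) ×
        EuclideanSpace ℝ (Fin p)) × EuclideanSpace ℝ (Fin p) => d z.1.2.1 z.1.1 :=
      hdm.comp ((measurable_fst.snd.fst).prodMk measurable_fst.fst)
    have h2 : Measurable fun z : (EuclideanSpace ℝ (Fin p) × EuclideanSpace ℝ (Fin p) ×
        EuclideanSpace ℝ (Fin p)) × EuclideanSpace ℝ (Fin p) => d z.2 z.1.1 :=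
      hdm.comp (measurable_snd.prodMk measurable_fst.fst)
    have h3 : Measurable fun z : (EuclideanSpace ℝ (Fin p) × EuclideanSpace ℝ (Fin p) ×
        EuclideanSpace ℝ (Fin p)) × EuclideanSpace ℝ (Fin p) => d z.1.2.2 z.1.1 :=
      hdm.comp ((measurable_fst.snd.snd).prodMk measurable_fst.fst)
    exact ((h1.pow_const 2).mul h2).mul h3
  have key : ∫ ω, d (X₁ ω) (X ω) ^ 2 * d (X₂ ω) (X ω) * d (X₃ ω) (X ω) ∂μ
      = ∫ z, H z ∂((μ.map (fun ω => (X ω, X₁ ω, X₃ ω))).prod F) := by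
    rw [← hmapY, integral_map (hYm.prodMk hX₂).aemeasurable
      hHm.aestronglyMeasurable]
  rw [key]
  by_cases hi : Integrable H ((μ.map (fun ω => (X ω, X₁ ω, X₃ ω))).prod F)
  · rw [integral_prod _ hi]
    have hinner : ∀ y : EuclideanSpace ℝ (Fin p) × EuclideanSpace ℝ (Fin p) ×
        EuclideanSpace ℝ (Fin p), (∫ x₂, H (y, x₂) ∂F) = 0 := by
      intro y
      have hrw : (fun x₂ => H (y, x₂))
          = fun x₂ => (d y.2.1 y.1 ^ 2 * d y.2.2 y.1) * d x₂ y.1 := by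
        funext x₂; simp only [hHdef]; ring
      rw [hrw, integral_const_mul, hzero, mul_zero]
    simp_rw [hinner, integral_zero]
  · exact integral_undef hi
end

section
/- If E‖X‖⁴ < ∞, then for independent X, X₁, X₂ with distribution F, the double centered distance satisfies E[d³(X₁,X) · d(X₂,X)] = 0. -/
open MeasureTheory ProbabilityTheory

/-- If `E‖X‖⁴ < ∞`, then for independent `X, X₁, X₂` with
distribution `F`, the double centered distance satisfies `E[d³(X₁,X) · d(X₂,X)] = 0`. -/
theorem gini_double_centered_cube_orthogonal
    {Ω : Type*} [MeasurableSpace Ω] (μ : Measure Ω) [IsProbabilityMeasure μ]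
    (p : ℕ) (F : Measure (EuclideanSpace ℝ (Fin p))) [IsProbabilityMeasure F]
    (X X₁ X₂ : Ω → EuclideanSpace ℝ (Fin p))
    (hX : Measurable X) (hX₁ : Measurable X₁) (hX₂ : Measurable X₂)
    (hXF : μ.map X = F) (hX₁F : μ.map X₁ = F) (hX₂F : μ.map X₂ = F)
    (hindep : iIndepFun ![X, X₁, X₂] μ)
    (hmom : Integrable (fun x => ‖x‖ ^ 4) F)
    (Δ : ℝ) (hΔ : Δ = ∫ x, ∫ y, ‖x - y‖ ∂F ∂F)
    (g : EuclideanSpace ℝ (Fin p) → ℝ) (hg : ∀ x, g x = ∫ y, ‖y - x‖ ∂F)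
    (d : EuclideanSpace ℝ (Fin p) → EuclideanSpace ℝ (Fin p) → ℝ)
    (hd : ∀ x₁ x₂, d x₁ x₂ = ‖x₁ - x₂‖ - g x₁ - g x₂ + Δ) :
    ∫ ω, d (X₁ ω) (X ω) ^ 3 * d (X₂ ω) (X ω) ∂μ = 0 := by
  -- moment facts
  have hpow : ∀ k : ℕ, k ≤ 4 → Integrable (fun x : EuclideanSpace ℝ (Fin p) => (‖x‖ + 1) ^ k) F := by
    intro k hk
    refine ((hmom.add (integrable_const 1)).const_mul 8).mono'
      ((continuous_norm.add continuous_const).pow k).aestronglyMeasurable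
      (Filter.Eventually.of_forall fun x => ?_)
    have hx : (0:ℝ) ≤ ‖x‖ := norm_nonneg x
    have h1 : (‖x‖ + 1) ^ k ≤ (‖x‖ + 1) ^ 4 :=
      pow_le_pow_right₀ (by linarith) hk
    have h2 : (‖x‖ + 1) ^ 4 ≤ 8 * (‖x‖ ^ 4 + 1) := by nlinarith [sq_nonneg (‖x‖ - 1), sq_nonneg (‖x‖ ^ 2 - 1), sq_nonneg ‖x‖]
    have h3 : (0:ℝ) ≤ (‖x‖ + 1) ^ k := by positivity
    simp only [Pi.add_apply]
    rw [Real.norm_eq_abs, abs_of_nonneg h3]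
    linarith
  have hmom1 : Integrable (fun x : EuclideanSpace ℝ (Fin p) => ‖x‖) F := by
    refine (hmom.add (integrable_const 1)).mono' continuous_norm.aestronglyMeasurable
      (Filter.Eventually.of_forall fun x => ?_)
    have hx : (0:ℝ) ≤ ‖x‖ := norm_nonneg x
    simp only [Pi.add_apply]
    rw [Real.norm_eq_abs, abs_of_nonneg hx]
    nlinarith [sq_nonneg (‖x‖ - 1), sq_nonneg (‖x‖ ^ 2 - 1), sq_nonneg (‖x‖ ^ 2 - ‖x‖)]
  set C₁ : ℝ := ∫ y, ‖y‖ ∂F with hC₁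
  have hC₁0 : 0 ≤ C₁ := integral_nonneg fun y => norm_nonneg y
  -- measurability of g
  have hgmeas : StronglyMeasurable g := by
    have hcont : StronglyMeasurable (fun q : EuclideanSpace ℝ (Fin p) × EuclideanSpace ℝ (Fin p) => ‖q.2 - q.1‖) :=
      (continuous_snd.sub continuous_fst).norm.stronglyMeasurable
    have hgeq : g = fun x => ∫ y, ‖y - x‖ ∂F := funext hg
    rw [hgeq]
    exact hcont.integral_prod_right' (ν := F)
  -- integrability of (y ↦ ‖y - x‖)
  have hnint : ∀ x : EuclideanSpace ℝ (Fin p), Integrable (fun y : EuclideanSpace ℝ (Fin p) => ‖y - x‖) F := by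
    intro x
    refine (hmom1.add (integrable_const ‖x‖)).mono'
      (continuous_norm.comp (continuous_id.sub continuous_const)).aestronglyMeasurable
      (Filter.Eventually.of_forall fun y => ?_)
    rw [Real.norm_eq_abs, abs_of_nonneg (norm_nonneg _)]
    exact norm_sub_le y x
  -- bound on g
  have hgbound : ∀ x : EuclideanSpace ℝ (Fin p), |g x| ≤ C₁ + ‖x‖ := by
    intro x
    rw [hg x, abs_of_nonneg (integral_nonneg fun y => norm_nonneg _)]
    calc ∫ y, ‖y - x‖ ∂F ≤ ∫ y, (‖y‖ + ‖x‖) ∂F :=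
          integral_mono (hnint x) (hmom1.add (integrable_const ‖x‖)) fun y => norm_sub_le y x
      _ = C₁ + ‖x‖ := by
          rw [integral_add hmom1 (integrable_const _), integral_const]
          simp
          rfl
  -- g is integrable
  have hgint : Integrable g F := by
    refine ((integrable_const C₁).add hmom1).mono' hgmeas.aestronglyMeasurable
      (Filter.Eventually.of_forall fun x => ?_)
    rw [Real.norm_eq_abs]
    exact hgbound x
  -- mean of g is Δ
  have hgΔ : ∫ x, g x ∂F = Δ := by
    rw [hΔ]
    refine integral_congr_ae (Filter.Eventually.of_forall fun x => ?_)
    rw [hg x]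
    exact integral_congr_ae (Filter.Eventually.of_forall fun y => norm_sub_rev y x)
  -- the key centering identity
  have hzero : ∀ x : EuclideanSpace ℝ (Fin p), ∫ y, d y x ∂F = 0 := by
    intro x
    have heq : (fun y : EuclideanSpace ℝ (Fin p) => d y x) = fun y => (‖y - x‖ - g y) + (Δ - g x) := by
      funext y; rw [hd]; ring
    have hA : Integrable (fun y : EuclideanSpace ℝ (Fin p) => ‖y - x‖ - g y) F :=
      (hnint x).sub hgint
    rw [heq, integral_add hA (integrable_const _),
      integral_sub (hnint x) hgint, hgΔ, integral_const]
    have : ∫ y, ‖y - x‖ ∂F = g x := (hg x).symm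
    rw [this]
    simp
  -- uniform bound on d
  set c : ℝ := 2 + 2 * C₁ + |Δ| with hc
  have hc0 : 0 ≤ c := by positivity
  have hdb : ∀ a b : EuclideanSpace ℝ (Fin p), |d a b| ≤ c * ((‖a‖ + 1) * (‖b‖ + 1)) := by
    intro a b
    have h1 : |d a b| ≤ ‖a - b‖ + |g a| + |g b| + |Δ| := by
      rw [hd]
      have t1 : |‖a - b‖ - g a - g b + Δ| ≤ |‖a - b‖ - g a - g b| + |Δ| := abs_add_le _ _
      have t2 : |‖a - b‖ - g a - g b| ≤ |‖a - b‖ - g a| + |g b| := abs_sub _ _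
      have t3 : |‖a - b‖ - g a| ≤ |‖a - b‖| + |g a| := abs_sub _ _
      have t4 : |‖a - b‖| = ‖a - b‖ := abs_of_nonneg (norm_nonneg _)
      linarith
    have h2 : ‖a - b‖ ≤ ‖a‖ + ‖b‖ := norm_sub_le a b
    have h3 := hgbound a
    have h4 := hgbound b
    have ha : (0:ℝ) ≤ ‖a‖ := norm_nonneg a
    have hb : (0:ℝ) ≤ ‖b‖ := norm_nonneg b
    have hΔ0 : (0:ℝ) ≤ |Δ| := abs_nonneg Δ
    nlinarith [mul_nonneg ha hb, mul_nonneg hC₁0 ha, mul_nonneg hC₁0 hb,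
      mul_nonneg hΔ0 ha, mul_nonneg hΔ0 hb, mul_nonneg hΔ0 (mul_nonneg ha hb),
      mul_nonneg hC₁0 (mul_nonneg ha hb)]
  -- measurability of d as a function of two variables
  have hdmeas : StronglyMeasurable (fun q : EuclideanSpace ℝ (Fin p) × EuclideanSpace ℝ (Fin p) => d q.1 q.2) := by
    have : (fun q : EuclideanSpace ℝ (Fin p) × EuclideanSpace ℝ (Fin p) => d q.1 q.2)
        = fun q => ‖q.1 - q.2‖ - g q.1 - g q.2 + Δ := by
      funext q; exact hd q.1 q.2
    rw [this]
    exact ((((continuous_fst.sub continuous_snd).norm.stronglyMeasurable).sub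
      (hgmeas.comp_measurable measurable_fst)).sub
      (hgmeas.comp_measurable measurable_snd)).add stronglyMeasurable_const
  -- setup the joint law
  set ψ : (EuclideanSpace ℝ (Fin p) × EuclideanSpace ℝ (Fin p)) × EuclideanSpace ℝ (Fin p) → ℝ := fun z => d z.1.2 z.1.1 ^ 3 * d z.2 z.1.1 with hψ
  have hψmeas : StronglyMeasurable ψ := by
    have h1 : StronglyMeasurable (fun z : (EuclideanSpace ℝ (Fin p) × EuclideanSpace ℝ (Fin p)) × EuclideanSpace ℝ (Fin p) => d z.1.2 z.1.1) :=
      hdmeas.comp_measurable ((measurable_fst.snd).prodMk (measurable_fst.fst))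
    have h2 : StronglyMeasurable (fun z : (EuclideanSpace ℝ (Fin p) × EuclideanSpace ℝ (Fin p)) × EuclideanSpace ℝ (Fin p) => d z.2 z.1.1) :=
      hdmeas.comp_measurable (measurable_snd.prodMk (measurable_fst.fst))
    exact (h1.pow 3).mul h2
  have hmeas' : ∀ i, Measurable (![X, X₁, X₂] i) := by
    intro i; fin_cases i <;> simpa
  have h01 : IndepFun X X₁ μ := by
    have := hindep.indepFun (i := 0) (j := 1) (by decide)
    simpa using this
  have hmapXX₁ : μ.map (fun ω => (X ω, X₁ ω)) = F.prod F := by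
    rw [(indepFun_iff_map_prod_eq_prod_map_map hX.aemeasurable hX₁.aemeasurable).mp h01,
      hXF, hX₁F]
  have hpair2 : IndepFun (fun ω => (X ω, X₁ ω)) X₂ μ := by
    have := hindep.indepFun_prodMk hmeas' 0 1 2 (by decide) (by decide)
    simpa using this
  have hmapT : μ.map (fun ω => ((X ω, X₁ ω), X₂ ω)) = (F.prod F).prod F := by
    rw [(indepFun_iff_map_prod_eq_prod_map_map
      ((hX.prodMk hX₁).aemeasurable) hX₂.aemeasurable).mp hpair2, hmapXX₁, hX₂F]
  -- integrability of ψ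
  have hψint : Integrable ψ ((F.prod F).prod F) := by
    have hB : Integrable (fun z : (EuclideanSpace ℝ (Fin p) × EuclideanSpace ℝ (Fin p)) × EuclideanSpace ℝ (Fin p) =>
        ((c ^ 4 * (‖z.1.1‖ + 1) ^ 4) * (‖z.1.2‖ + 1) ^ 3) * (‖z.2‖ + 1) ^ 1)
        ((F.prod F).prod F) :=
      (((hpow 4 le_rfl).const_mul (c ^ 4)).mul_prod (hpow 3 (by norm_num))).mul_prod
        (hpow 1 (by norm_num))
    refine hB.mono' hψmeas.aestronglyMeasurable (Filter.Eventually.of_forall fun z => ?_)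
    obtain ⟨⟨x, x₁⟩, x₂⟩ := z
    have h1 := hdb x₁ x
    have h2 := hdb x₂ x
    have ha : (0:ℝ) ≤ ‖x‖ + 1 := by positivity
    have ha1 : (0:ℝ) ≤ ‖x₁‖ + 1 := by positivity
    have ha2 : (0:ℝ) ≤ ‖x₂‖ + 1 := by positivity
    rw [Real.norm_eq_abs, abs_mul, abs_pow]
    calc |d x₁ x| ^ 3 * |d x₂ x|
        ≤ (c * ((‖x₁‖ + 1) * (‖x‖ + 1))) ^ 3 * (c * ((‖x₂‖ + 1) * (‖x‖ + 1))) := by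
          refine mul_le_mul (pow_le_pow_left₀ (abs_nonneg _) h1 3) h2 (abs_nonneg _) ?_
          positivity
      _ = ((c ^ 4 * (‖x‖ + 1) ^ 4) * (‖x₁‖ + 1) ^ 3) * (‖x₂‖ + 1) ^ 1 := by ring
  -- main computation
  have hT : AEMeasurable (fun ω => ((X ω, X₁ ω), X₂ ω)) μ :=
    ((hX.prodMk hX₁).prodMk hX₂).aemeasurable
  calc ∫ ω, d (X₁ ω) (X ω) ^ 3 * d (X₂ ω) (X ω) ∂μ
      = ∫ z, ψ z ∂((F.prod F).prod F) := by
        rw [← hmapT, integral_map hT (hψmeas.aestronglyMeasurable.mono_measure le_rfl)]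
    _ = ∫ q, ∫ x₂, ψ (q, x₂) ∂F ∂(F.prod F) := integral_prod ψ hψint
    _ = 0 := by
        have hinner : ∀ q : EuclideanSpace ℝ (Fin p) × EuclideanSpace ℝ (Fin p), ∫ x₂, ψ (q, x₂) ∂F = 0 := by
          intro q
          simp only [hψ]
          rw [integral_const_mul, hzero q.1, mul_zero]
        simp only [hinner, integral_zero]
end

section
/- If E‖X‖⁴ < ∞, then the function η(x₁,x₂) = E[d(X,x₁) · d(X,x₂)] satisfies E η(X₁,X₂) = 0 and E[η(X₁,X₂) · η(X₁,X₃)] = 0, for independent X₁, X₂, X₃ with distribution F. -/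
open MeasureTheory ProbabilityTheory

set_option maxHeartbeats 1000000

/-- If `E‖X‖⁴ < ∞`, then `η(x₁,x₂) = E[d(X,x₁) · d(X,x₂)]` satisfies
`E η(X₁,X₂) = 0` and `E[η(X₁,X₂) · η(X₁,X₃)] = 0` for independent `X₁, X₂, X₃ ~ F`. -/
theorem gini_eta_orthogonal
    {Ω : Type*} [MeasurableSpace Ω] (μ : Measure Ω) [IsProbabilityMeasure μ]
    (p : ℕ) (F : Measure (EuclideanSpace ℝ (Fin p))) [IsProbabilityMeasure F]
    (X₁ X₂ X₃ : Ω → EuclideanSpace ℝ (Fin p))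
    (hX₁ : Measurable X₁) (hX₂ : Measurable X₂) (hX₃ : Measurable X₃)
    (hX₁F : μ.map X₁ = F) (hX₂F : μ.map X₂ = F) (hX₃F : μ.map X₃ = F)
    (hindep : iIndepFun ![X₁, X₂, X₃] μ)
    (hmom : Integrable (fun x => ‖x‖ ^ 4) F)
    (Δ : ℝ) (hΔ : Δ = ∫ x, ∫ y, ‖x - y‖ ∂F ∂F)
    (g : EuclideanSpace ℝ (Fin p) → ℝ) (hg : ∀ x, g x = ∫ y, ‖y - x‖ ∂F)
    (d : EuclideanSpace ℝ (Fin p) → EuclideanSpace ℝ (Fin p) → ℝ)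
    (hd : ∀ x₁ x₂, d x₁ x₂ = ‖x₁ - x₂‖ - g x₁ - g x₂ + Δ)
    (η : EuclideanSpace ℝ (Fin p) → EuclideanSpace ℝ (Fin p) → ℝ)
    (hη : ∀ x₁ x₂, η x₁ x₂ = ∫ y, d y x₁ * d y x₂ ∂F) :
    (∫ ω, η (X₁ ω) (X₂ ω) ∂μ = 0)
    ∧ (∫ ω, η (X₁ ω) (X₂ ω) * η (X₁ ω) (X₃ ω) ∂μ = 0) := by
  classical
  -- lower moments
  have hmom1 : Integrable (fun x : (EuclideanSpace ℝ (Fin p)) => ‖x‖) F := by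
    refine ((integrable_const 1).add hmom).mono'
      (continuous_norm.aestronglyMeasurable) ?_
    filter_upwards with x
    rw [norm_norm]
    show ‖x‖ ≤ 1 + ‖x‖ ^ 4
    rcases le_or_gt ‖x‖ 1 with h | h
    · nlinarith [norm_nonneg x, pow_nonneg (norm_nonneg x) 4]
    · have : ‖x‖ ≤ ‖x‖ ^ 4 := le_self_pow₀ h.le (by norm_num)
      linarith
  have hmom2 : Integrable (fun x : (EuclideanSpace ℝ (Fin p)) => ‖x‖ ^ 2) F := by
    refine ((integrable_const 1).add hmom).mono'
      ((continuous_norm.pow 2).aestronglyMeasurable) ?_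
    filter_upwards with x
    rw [Real.norm_eq_abs, abs_of_nonneg (by positivity : (0:ℝ) ≤ ‖x‖ ^ 2)]
    show ‖x‖ ^ 2 ≤ 1 + ‖x‖ ^ 4
    nlinarith [sq_nonneg (‖x‖ ^ 2 - 1), sq_nonneg ‖x‖]
  set M : ℝ := ∫ x, ‖x‖ ∂F with hM
  have hM0 : 0 ≤ M := integral_nonneg fun x => norm_nonneg x
  -- integrability of translated norms
  have hint1 : ∀ x : (EuclideanSpace ℝ (Fin p)), Integrable (fun y : (EuclideanSpace ℝ (Fin p)) => ‖y - x‖) F := by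
    intro x
    refine (hmom1.add (integrable_const ‖x‖)).mono'
      (Continuous.aestronglyMeasurable (by continuity)) ?_
    filter_upwards with y
    rw [Real.norm_eq_abs, abs_of_nonneg (norm_nonneg _)]
    calc ‖y - x‖ ≤ ‖y‖ + ‖x‖ := norm_sub_le _ _
      _ = (fun y : (EuclideanSpace ℝ (Fin p)) => ‖y‖ + ‖x‖) y := rfl
  have hint1' : ∀ x : (EuclideanSpace ℝ (Fin p)), Integrable ((fun y : (EuclideanSpace ℝ (Fin p)) => ‖x - y‖)) F := by
    intro x
    have : (fun y : (EuclideanSpace ℝ (Fin p)) => ‖x - y‖) = fun y : (EuclideanSpace ℝ (Fin p)) => ‖y - x‖ := funext fun y => norm_sub_rev _ _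
    rw [this]; exact hint1 x
  -- basic facts about g
  have hgnn : ∀ x, 0 ≤ g x := fun x => by
    rw [hg]; exact integral_nonneg fun y => norm_nonneg _
  have hgle : ∀ x, g x ≤ M + ‖x‖ := by
    intro x
    rw [hg]
    calc ∫ y, ‖y - x‖ ∂F ≤ ∫ y, (‖y‖ + ‖x‖) ∂F := by
          refine integral_mono (hint1 x) (hmom1.add (integrable_const _)) fun y => norm_sub_le y x
      _ = M + ‖x‖ := by
          rw [integral_add hmom1 (integrable_const _), integral_const]; simp [hM]
  have hglip : LipschitzWith 1 g := by
    apply LipschitzWith.of_dist_le_mul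
    intro a b
    rw [NNReal.coe_one, one_mul, Real.dist_eq, hg a, hg b, ← integral_sub (hint1 a) (hint1 b)]
    have h1 : |∫ y, (‖y - a‖ - ‖y - b‖) ∂F| ≤ ∫ y, |‖y - a‖ - ‖y - b‖| ∂F := by
      rw [← Real.norm_eq_abs]
      exact norm_integral_le_of_norm_le ((hint1 a).sub (hint1 b)).abs
        (Filter.Eventually.of_forall fun y => by rw [Real.norm_eq_abs])
    refine h1.trans ?_
    calc ∫ y, |‖y - a‖ - ‖y - b‖| ∂F ≤ ∫ _y : (EuclideanSpace ℝ (Fin p)), dist a b ∂F := by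
          refine integral_mono ((hint1 a).sub (hint1 b)).abs (integrable_const _) fun y => ?_
          calc |‖y - a‖ - ‖y - b‖| ≤ ‖(y - a) - (y - b)‖ := abs_norm_sub_norm_le _ _
            _ = ‖b - a‖ := by congr 1; abel
            _ = dist a b := by rw [dist_eq_norm, norm_sub_rev]
      _ = dist a b := by rw [integral_const]; simp
  have hgm : Measurable g := hglip.continuous.measurable
  have hgint : Integrable g F := by
    refine ((integrable_const M).add hmom1).mono' hgm.aestronglyMeasurable ?_
    filter_upwards with x
    rw [Real.norm_eq_abs, abs_of_nonneg (hgnn x)]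
    exact hgle x
  have hΔ0 : 0 ≤ Δ := by
    rw [hΔ]
    exact integral_nonneg fun x => integral_nonneg fun y => norm_nonneg _
  have hgΔ : ∫ x, g x ∂F = Δ := by
    rw [hΔ]
    refine integral_congr_ae (Filter.Eventually.of_forall fun x => ?_)
    rw [hg]
    refine integral_congr_ae (Filter.Eventually.of_forall fun y => ?_)
    exact norm_sub_rev _ _
  -- the kernel d integrates to zero in each variable
  have hd0 : ∀ x : (EuclideanSpace ℝ (Fin p)), ∫ y, d y x ∂F = 0 := by
    intro x
    have e : (fun y => d y x) = fun y => ‖y - x‖ - g y - g x + Δ := funext fun y => hd y x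
    have i1 : Integrable (fun y : (EuclideanSpace ℝ (Fin p)) => ‖y - x‖ - g y) F :=
      (hint1 x).sub hgint
    have i2 : Integrable (fun y : (EuclideanSpace ℝ (Fin p)) => ‖y - x‖ - g y - g x) F :=
      i1.sub (integrable_const _)
    rw [e, integral_add i2 (integrable_const _), integral_sub i1 (integrable_const _),
      integral_sub (hint1 x) hgint, hgΔ, ← hg, integral_const, integral_const]
    simp
  have hd0' : ∀ y : (EuclideanSpace ℝ (Fin p)), ∫ x, d y x ∂F = 0 := by
    intro y
    have e : (fun x => d y x) = fun x => ‖y - x‖ - g y - g x + Δ := funext fun x => hd y x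
    have e2 : ∫ x, ‖y - x‖ ∂F = g y := by
      rw [hg]
      exact integral_congr_ae (Filter.Eventually.of_forall fun x => norm_sub_rev _ _)
    have i1 : Integrable (fun x : (EuclideanSpace ℝ (Fin p)) => ‖y - x‖ - g y) F :=
      (hint1' y).sub (integrable_const _)
    have i2 : Integrable (fun x : (EuclideanSpace ℝ (Fin p)) => ‖y - x‖ - g y - g x) F :=
      i1.sub hgint
    rw [e, integral_add i2 (integrable_const _), integral_sub i1 hgint,
      integral_sub (hint1' y) (integrable_const _), e2, hgΔ, integral_const, integral_const]
    simp
  -- bound on d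
  set C : ℝ := 2 * M + Δ + 2 with hC
  have hC0 : 0 ≤ C := by positivity
  have hdb : ∀ y x : (EuclideanSpace ℝ (Fin p)), |d y x| ≤ C * (1 + ‖y‖) * (1 + ‖x‖) := by
    intro y x
    rw [hd, abs_le]
    have h1 : ‖y - x‖ ≤ ‖y‖ + ‖x‖ := norm_sub_le _ _
    have h2 : (0:ℝ) ≤ ‖y - x‖ := norm_nonneg _
    have h3 := hgnn y; have h4 := hgnn x; have h5 := hgle y; have h6 := hgle x
    have h7 : (0:ℝ) ≤ ‖y‖ := norm_nonneg _; have h8 : (0:ℝ) ≤ ‖x‖ := norm_nonneg _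
    constructor <;>
      nlinarith [mul_nonneg h7 h8, mul_nonneg hM0 h7, mul_nonneg hM0 h8,
        mul_nonneg hΔ0 h7, mul_nonneg hΔ0 h8, mul_nonneg (mul_nonneg hM0 h7) h8,
        mul_nonneg (mul_nonneg hΔ0 h7) h8]
  -- weights
  have hw : Integrable (fun x : (EuclideanSpace ℝ (Fin p)) => 1 + ‖x‖) F := (integrable_const 1).add hmom1
  have hw2 : Integrable (fun x : (EuclideanSpace ℝ (Fin p)) => (1 + ‖x‖) ^ 2) F := by
    refine ((integrable_const 2).add (hmom2.const_mul 2)).mono'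
      (Continuous.aestronglyMeasurable (by continuity)) ?_
    filter_upwards with x
    rw [Real.norm_eq_abs, abs_of_nonneg (by positivity : (0:ℝ) ≤ (1 + ‖x‖) ^ 2)]
    show (1 + ‖x‖) ^ 2 ≤ 2 + 2 * ‖x‖ ^ 2
    nlinarith [sq_nonneg (‖x‖ - 1)]
  -- measurability of d and η (uncurried)
  have hdm : Measurable (fun q : (EuclideanSpace ℝ (Fin p)) × (EuclideanSpace ℝ (Fin p)) => d q.1 q.2) := by
    have e : (fun q : (EuclideanSpace ℝ (Fin p)) × (EuclideanSpace ℝ (Fin p)) => d q.1 q.2)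
        = fun q : (EuclideanSpace ℝ (Fin p)) × (EuclideanSpace ℝ (Fin p)) => ‖q.1 - q.2‖ - g q.1 - g q.2 + Δ := funext fun q => hd q.1 q.2
    rw [e]
    exact (((continuous_fst.sub continuous_snd).norm.measurable.sub
      (hgm.comp measurable_fst)).sub (hgm.comp measurable_snd)).add measurable_const
  have hηm : Measurable (fun q : (EuclideanSpace ℝ (Fin p)) × (EuclideanSpace ℝ (Fin p)) => η q.1 q.2) := by
    have e : (fun q : (EuclideanSpace ℝ (Fin p)) × (EuclideanSpace ℝ (Fin p)) => η q.1 q.2)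
        = fun q : (EuclideanSpace ℝ (Fin p)) × (EuclideanSpace ℝ (Fin p)) => ∫ y, d y q.1 * d y q.2 ∂F := funext fun q => hη q.1 q.2
    rw [e]
    have hsm : StronglyMeasurable (fun r : ((EuclideanSpace ℝ (Fin p)) × (EuclideanSpace ℝ (Fin p))) × (EuclideanSpace ℝ (Fin p)) => d r.2 r.1.1 * d r.2 r.1.2) :=
      ((hdm.comp (measurable_snd.prodMk (measurable_fst.comp measurable_fst))).mul
        (hdm.comp (measurable_snd.prodMk (measurable_snd.comp measurable_fst)))).stronglyMeasurable
    exact hsm.integral_prod_right'.measurable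
  -- bound on η
  set I2 : ℝ := ∫ y, (1 + ‖y‖) ^ 2 ∂F with hI2
  have hI20 : 0 ≤ I2 := integral_nonneg fun y => by positivity
  set K : ℝ := C ^ 2 * I2 with hK
  have hK0 : 0 ≤ K := by positivity
  have hηb : ∀ x₁ x₂ : (EuclideanSpace ℝ (Fin p)), |η x₁ x₂| ≤ K * (1 + ‖x₁‖) * (1 + ‖x₂‖) := by
    intro x₁ x₂
    rw [hη, ← Real.norm_eq_abs]
    calc ‖∫ y, d y x₁ * d y x₂ ∂F‖
        ≤ ∫ y, (C ^ 2 * (1 + ‖x₁‖) * (1 + ‖x₂‖)) * (1 + ‖y‖) ^ 2 ∂F := by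
          refine norm_integral_le_of_norm_le (hw2.const_mul _)
            (Filter.Eventually.of_forall fun y => ?_)
          rw [Real.norm_eq_abs, abs_mul]
          calc |d y x₁| * |d y x₂|
              ≤ (C * (1 + ‖y‖) * (1 + ‖x₁‖)) * (C * (1 + ‖y‖) * (1 + ‖x₂‖)) := by
                refine mul_le_mul (hdb y x₁) (hdb y x₂) (abs_nonneg _) (by positivity)
            _ = (C ^ 2 * (1 + ‖x₁‖) * (1 + ‖x₂‖)) * (1 + ‖y‖) ^ 2 := by ring
      _ = K * (1 + ‖x₁‖) * (1 + ‖x₂‖) := by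
          rw [integral_const_mul, hK, ← hI2]; ring
  -- ∫ η x₁ x₂ dF(x₂) = 0
  have hη0 : ∀ x₁ : (EuclideanSpace ℝ (Fin p)), ∫ x₂, η x₁ x₂ ∂F = 0 := by
    intro x₁
    have hint : Integrable (Function.uncurry fun (x₂ y : (EuclideanSpace ℝ (Fin p))) => d y x₁ * d y x₂) (F.prod F) := by
      refine ((hw.mul_prod hw2).const_mul (C ^ 2 * (1 + ‖x₁‖))).mono'
        (((hdm.comp (measurable_snd.prodMk measurable_const)).mul
          (hdm.comp (measurable_snd.prodMk measurable_fst))).aestronglyMeasurable) ?_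
      filter_upwards with q
      show ‖d q.2 x₁ * d q.2 q.1‖ ≤ C ^ 2 * (1 + ‖x₁‖) * ((1 + ‖q.1‖) * (1 + ‖q.2‖) ^ 2)
      rw [Real.norm_eq_abs, abs_mul]
      calc |d q.2 x₁| * |d q.2 q.1|
          ≤ (C * (1 + ‖q.2‖) * (1 + ‖x₁‖)) * (C * (1 + ‖q.2‖) * (1 + ‖q.1‖)) :=
            mul_le_mul (hdb _ _) (hdb _ _) (abs_nonneg _) (by positivity)
        _ = C ^ 2 * (1 + ‖x₁‖) * ((1 + ‖q.1‖) * (1 + ‖q.2‖) ^ 2) := by ring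
    calc ∫ x₂, η x₁ x₂ ∂F = ∫ x₂, ∫ y, d y x₁ * d y x₂ ∂F ∂F := by
          exact integral_congr_ae (Filter.Eventually.of_forall fun x₂ => hη x₁ x₂)
      _ = ∫ y, ∫ x₂, d y x₁ * d y x₂ ∂F ∂F := integral_integral_swap hint
      _ = 0 := by
          refine Eq.trans (integral_congr_ae (Filter.Eventually.of_forall fun y => ?_))
            (integral_zero _ _)
          show ∫ x₂, d y x₁ * d y x₂ ∂F = 0
          rw [integral_const_mul, hd0' y, mul_zero]
  -- integrability of η on the product
  have hηint : Integrable (fun q : (EuclideanSpace ℝ (Fin p)) × (EuclideanSpace ℝ (Fin p)) => η q.1 q.2) (F.prod F) := by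
    refine ((hw.mul_prod hw).const_mul K).mono' hηm.aestronglyMeasurable ?_
    filter_upwards with q
    rw [Real.norm_eq_abs]
    calc |η q.1 q.2| ≤ K * (1 + ‖q.1‖) * (1 + ‖q.2‖) := hηb _ _
      _ = K * ((1 + ‖q.1‖) * (1 + ‖q.2‖)) := by ring
  -- joint laws
  have hjoint12 : μ.map (fun ω => (X₁ ω, X₂ ω)) = F.prod F := by
    have h := hindep.indepFun (show (0 : Fin 3) ≠ 1 by decide)
    simp only [Matrix.cons_val_zero, Matrix.cons_val_one, Matrix.head_cons] at h
    rw [indepFun_iff_map_prod_eq_prod_map_map hX₁.aemeasurable hX₂.aemeasurable] at h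
    rw [h, hX₁F, hX₂F]
  have hjoint : μ.map (fun ω => (X₁ ω, (X₂ ω, X₃ ω))) = F.prod (F.prod F) := by
    have hmeas : ∀ i, Measurable (![X₁, X₂, X₃] i) := by
      intro i; fin_cases i <;> simpa using ‹_›
    have h23 : IndepFun X₂ X₃ μ := by
      have h := hindep.indepFun (show (1 : Fin 3) ≠ 2 by decide)
      simpa using h
    have h1 : IndepFun X₁ (fun ω => (X₂ ω, X₃ ω)) μ := by
      have h := hindep.indepFun_prodMk hmeas 1 2 0 (by decide) (by decide)
      simpa using h.symm
    rw [indepFun_iff_map_prod_eq_prod_map_map hX₁.aemeasurable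
      (hX₂.prodMk hX₃).aemeasurable] at h1
    rw [h1, hX₁F]
    congr 1
    rw [indepFun_iff_map_prod_eq_prod_map_map hX₂.aemeasurable hX₃.aemeasurable] at h23
    rw [h23, hX₂F, hX₃F]
  constructor
  · -- first claim
    have e1 : ∫ ω, η (X₁ ω) (X₂ ω) ∂μ = ∫ q : (EuclideanSpace ℝ (Fin p)) × (EuclideanSpace ℝ (Fin p)), η q.1 q.2 ∂(F.prod F) := by
      rw [← hjoint12, integral_map (hX₁.prodMk hX₂).aemeasurable
        (hjoint12 ▸ hηm.aestronglyMeasurable)]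
    rw [e1, integral_prod _ hηint]
    exact Eq.trans (integral_congr_ae (Filter.Eventually.of_forall fun x₁ => hη0 x₁)) (integral_zero _ _)
  · -- second claim
    have hHm : Measurable (fun q : (EuclideanSpace ℝ (Fin p)) × ((EuclideanSpace ℝ (Fin p)) × (EuclideanSpace ℝ (Fin p))) => η q.1 q.2.1 * η q.1 q.2.2) :=
      (hηm.comp (measurable_fst.prodMk (measurable_fst.comp measurable_snd))).mul
        (hηm.comp (measurable_fst.prodMk (measurable_snd.comp measurable_snd)))
    have hHint : Integrable (fun q : (EuclideanSpace ℝ (Fin p)) × ((EuclideanSpace ℝ (Fin p)) × (EuclideanSpace ℝ (Fin p))) => η q.1 q.2.1 * η q.1 q.2.2)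
        (F.prod (F.prod F)) := by
      refine (((hw2.const_mul (K ^ 2)).mul_prod (hw.mul_prod hw))).mono'
        hHm.aestronglyMeasurable ?_
      filter_upwards with q
      rw [Real.norm_eq_abs, abs_mul]
      calc |η q.1 q.2.1| * |η q.1 q.2.2|
          ≤ (K * (1 + ‖q.1‖) * (1 + ‖q.2.1‖)) * (K * (1 + ‖q.1‖) * (1 + ‖q.2.2‖)) :=
            mul_le_mul (hηb _ _) (hηb _ _) (abs_nonneg _) (by positivity)
        _ = K ^ 2 * (1 + ‖q.1‖) ^ 2 * ((1 + ‖q.2.1‖) * (1 + ‖q.2.2‖)) := by ring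
    have e2 : ∫ ω, η (X₁ ω) (X₂ ω) * η (X₁ ω) (X₃ ω) ∂μ
        = ∫ q : (EuclideanSpace ℝ (Fin p)) × ((EuclideanSpace ℝ (Fin p)) × (EuclideanSpace ℝ (Fin p))), η q.1 q.2.1 * η q.1 q.2.2 ∂(F.prod (F.prod F)) := by
      rw [← hjoint, integral_map (hX₁.prodMk (hX₂.prodMk hX₃)).aemeasurable
        (hjoint ▸ hHm.aestronglyMeasurable)]
    rw [e2, integral_prod _ hHint]
    refine Eq.trans (integral_congr_ae (Filter.Eventually.of_forall fun x₁ => ?_)) (integral_zero _ _)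
    calc ∫ z : (EuclideanSpace ℝ (Fin p)) × (EuclideanSpace ℝ (Fin p)), η x₁ z.1 * η x₁ z.2 ∂(F.prod F)
        = (∫ x₂, η x₁ x₂ ∂F) * (∫ x₃, η x₁ x₃ ∂F) := integral_prod_mul _ _
      _ = 0 := by rw [hη0 x₁, zero_mul]
end
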